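/- For every element f of PL_2(I) there exist dyadic subdivisions D and R of [0,1] with the same number of intervals such that f maps the i-th interval of D affinely (linearly) onto the i-th interval of R for every i. -/

import Mathlib

/-- A real number is dyadic rational if it has the form `k / 2 ^ n`. -/
def IsDyadic (t : ℝ) : Prop := ∃ (k : ℤ) (n : ℕ), t = (k : ℝ) / 2 ^ n

/-- An (orientation-preserving, i.e. order-preserving) homeomorphism of `[0,1]`
belongs to `PL₂(I)` if there is a finite partition `0 = t₀ < t₁ < ⋯ < tₘ = 1`
into dyadic rational points such that on each piece `[tᵢ, tᵢ₊₁]` the map is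
affine with slope an integer power of `2`. -/
def IsPL2I (f : Set.Icc (0:ℝ) 1 ≃o Set.Icc (0:ℝ) 1) : Prop :=
  ∃ (m : ℕ) (t : Fin (m + 1) → ℝ) (z : Fin m → ℤ),
    t 0 = 0 ∧ t (Fin.last m) = 1 ∧ StrictMono t ∧ (∀ i, IsDyadic (t i)) ∧
    ∀ (i : Fin m) (u v : Set.Icc (0:ℝ) 1),
      (u : ℝ) ∈ Set.Icc (t i.castSucc) (t i.succ) →
      (v : ℝ) ∈ Set.Icc (t i.castSucc) (t i.succ) →
      (f u : ℝ) - (f v : ℝ) = (2 : ℝ) ^ (z i) * ((u : ℝ) - (v : ℝ))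

/-- For every `f ∈ PL₂(I)` there are dyadic subdivisions `D = (t₀,…,tₘ)` and
`R = (r₀,…,rₘ)` of `[0,1]` with the same number of intervals, each interval a
standard dyadic interval, such that `f` maps the `i`-th interval of `D`
affinely onto the `i`-th interval of `R`. -/
lemma IsDyadic.add {a b : ℝ} (ha : IsDyadic a) (hb : IsDyadic b) : IsDyadic (a + b) := by
  obtain ⟨k, n, rfl⟩ := ha; obtain ⟨l, p, rfl⟩ := hb
  refine ⟨k * 2 ^ p + l * 2 ^ n, n + p, ?_⟩
  push_cast
  rw [pow_add]
  field_simp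

lemma IsDyadic.neg {a : ℝ} (ha : IsDyadic a) : IsDyadic (-a) := by
  obtain ⟨k, n, rfl⟩ := ha; exact ⟨-k, n, by push_cast; ring⟩

lemma IsDyadic.zpow_mul {a : ℝ} (z : ℤ) (ha : IsDyadic a) : IsDyadic (2 ^ z * a) := by
  obtain ⟨k, n, rfl⟩ := ha
  rcases Int.eq_nat_or_neg z with ⟨w, rfl | rfl⟩
  · refine ⟨k * 2 ^ w, n, ?_⟩
    push_cast
    rw [zpow_natCast]
    ring
  · refine ⟨k, n + w, ?_⟩
    rw [zpow_neg, zpow_natCast, pow_add]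
    rw [← one_div, div_mul_div_comm, one_mul, mul_comm]

lemma IsDyadic.raise {x : ℝ} {n : ℕ} (hn : ∃ k : ℤ, x = (k : ℝ) / 2 ^ n)
    {E : ℕ} (hE : n ≤ E) : ∃ p : ℤ, x = (p : ℝ) / 2 ^ E := by
  obtain ⟨k, rfl⟩ := hn
  refine ⟨k * 2 ^ (E - n), ?_⟩
  have h2 : (2:ℝ) ^ E = 2 ^ n * 2 ^ (E - n) := by rw [← pow_add, Nat.add_sub_cancel' hE]
  rw [h2]; push_cast; field_simp

lemma orderIso_Icc_zero (f : Set.Icc (0:ℝ) 1 ≃o Set.Icc (0:ℝ) 1)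
    (h : (0:ℝ) ∈ Set.Icc (0:ℝ) 1) : (f ⟨0, h⟩ : ℝ) = 0 := by
  have h1 : (⟨0, h⟩ : Set.Icc (0:ℝ) 1) ≤ f.symm ⟨0, h⟩ := (f.symm ⟨0, h⟩).2.1
  have h2 : f ⟨0, h⟩ ≤ ⟨0, h⟩ := by
    have := f.monotone h1
    rwa [f.apply_symm_apply] at this
  exact le_antisymm h2 (f ⟨0, h⟩).2.1

lemma orderIso_Icc_one (f : Set.Icc (0:ℝ) 1 ≃o Set.Icc (0:ℝ) 1)
    (h : (1:ℝ) ∈ Set.Icc (0:ℝ) 1) : (f ⟨1, h⟩ : ℝ) = 1 := by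
  have h1 : f.symm ⟨1, h⟩ ≤ (⟨1, h⟩ : Set.Icc (0:ℝ) 1) := (f.symm ⟨1, h⟩).2.2
  have h2 : (⟨1, h⟩ : Set.Icc (0:ℝ) 1) ≤ f ⟨1, h⟩ := by
    have := f.monotone h1
    rwa [f.apply_symm_apply] at this
  exact le_antisymm (f ⟨1, h⟩).2.2 h2


theorem pl2I_exists_dyadic_subdivisions
    (f : Set.Icc (0:ℝ) 1 ≃o Set.Icc (0:ℝ) 1) (hf : IsPL2I f) :
    ∃ (m : ℕ) (t r : Fin (m + 1) → ℝ),
      t 0 = 0 ∧ t (Fin.last m) = 1 ∧ StrictMono t ∧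
      r 0 = 0 ∧ r (Fin.last m) = 1 ∧ StrictMono r ∧
      (∀ i : Fin m, ∃ (k n : ℕ), t i.castSucc = (k : ℝ) / 2 ^ n ∧
        t i.succ = ((k : ℝ) + 1) / 2 ^ n) ∧
      (∀ i : Fin m, ∃ (k n : ℕ), r i.castSucc = (k : ℝ) / 2 ^ n ∧
        r i.succ = ((k : ℝ) + 1) / 2 ^ n) ∧
      (∀ (i : Fin m) (u : Set.Icc (0:ℝ) 1),
        (u : ℝ) ∈ Set.Icc (t i.castSucc) (t i.succ) →
        (f u : ℝ) = r i.castSucc +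
          ((r i.succ - r i.castSucc) / (t i.succ - t i.castSucc)) *
            ((u : ℝ) - t i.castSucc)) := by
  classical
  obtain ⟨m, t, z, ht0, htl, htm, htd, haff⟩ := hf
  -- membership of t i in [0,1]
  have htmem : ∀ i, t i ∈ Set.Icc (0:ℝ) 1 := fun i =>
    ⟨ht0 ▸ htm.monotone (Fin.zero_le i), htl ▸ htm.monotone (Fin.le_last i)⟩
  set s : Fin (m+1) → ℝ := fun i => (f ⟨t i, htmem i⟩ : ℝ) with hs_def
  have hcsmem : ∀ i : Fin m, t i.castSucc ∈ Set.Icc (t i.castSucc) (t i.succ) :=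
    fun i => ⟨le_refl _, htm.monotone (Fin.castSucc_lt_succ : i.castSucc < i.succ).le⟩
  have hssmem : ∀ i : Fin m, t i.succ ∈ Set.Icc (t i.castSucc) (t i.succ) :=
    fun i => ⟨htm.monotone (Fin.castSucc_lt_succ : i.castSucc < i.succ).le, le_refl _⟩
  have hslope : ∀ i : Fin m,
      s i.succ - s i.castSucc = 2 ^ (z i) * (t i.succ - t i.castSucc) :=
    fun i => haff i ⟨t i.succ, htmem _⟩ ⟨t i.castSucc, htmem _⟩ (hssmem i) (hcsmem i)
  have hsd : ∀ i, IsDyadic (s i) := by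
    intro i
    induction i using Fin.induction with
    | zero =>
        have : s 0 = 0 := by
          have h00 : (⟨t 0, htmem 0⟩ : Set.Icc (0:ℝ) 1) = ⟨0, by norm_num⟩ :=
            Subtype.ext ht0
          simp only [hs_def, h00]
          exact orderIso_Icc_zero f (by norm_num)
        rw [this]; exact ⟨0, 0, by norm_num⟩
    | succ i ih =>
        have h1 : s i.succ = s i.castSucc +
            (2 ^ (z i) * t i.succ + -(2 ^ (z i) * t i.castSucc)) := by
          have := hslope i; ring_nf; ring_nf at this; linarith
        rw [h1]
        exact ih.add ((IsDyadic.zpow_mul (z i) (htd i.succ)).add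
          (IsDyadic.zpow_mul (z i) (htd i.castSucc)).neg)
  -- common denominators
  choose kt nt hkt using htd
  choose ks ns hks using hsd
  set E : ℕ := Finset.univ.sup (fun i : Fin (m+1) => max (nt i) (ns i)) with hE_def
  have hsupE : ∀ i, max (nt i) (ns i) ≤ E := by
    intro i; rw [hE_def]
    exact Finset.le_sup (f := fun i : Fin (m+1) => max (nt i) (ns i)) (Finset.mem_univ i)
  have hntE : ∀ i, nt i ≤ E := fun i => (le_max_left _ _).trans (hsupE i)
  have hnsE : ∀ i, ns i ≤ E := fun i => (le_max_right _ _).trans (hsupE i)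
  choose p hp using fun i => IsDyadic.raise ⟨kt i, hkt i⟩ (hntE i)
  choose q hq using fun i => IsDyadic.raise ⟨ks i, hks i⟩ (hnsE i)
  set Z : ℕ := Finset.univ.sup (fun i : Fin m => (z i).toNat) with hZ_def
  have hzZ : ∀ i : Fin m, z i ≤ (Z : ℤ) := by
    intro i
    have h1 : (z i).toNat ≤ Z := by
      rw [hZ_def]
      exact Finset.le_sup (f := fun i : Fin m => (z i).toNat) (Finset.mem_univ i)
    exact (Int.self_le_toNat _).trans (by exact_mod_cast h1)
  set N : ℕ := E + Z with hN_def
  have h2N : (0:ℝ) < 2 ^ N := by positivity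
  -- integrality of t at level N
  have htN : ∀ i, t i = ((p i * 2 ^ Z : ℤ) : ℝ) / 2 ^ N := by
    intro i
    rw [hp i, hN_def, pow_add]
    push_cast
    field_simp
  -- key containment
  have key : ∀ j : Fin (2 ^ N), ∃ i : Fin m,
      t i.castSucc ≤ ((j:ℕ):ℝ) / 2 ^ N ∧ (((j:ℕ):ℝ) + 1) / 2 ^ N ≤ t i.succ := by
    intro j
    set x : ℝ := ((j:ℕ):ℝ) / 2 ^ N with hx_def
    have hx1 : x < 1 := by
      rw [hx_def, div_lt_one h2N]
      exact_mod_cast j.isLt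
    set S : Finset (Fin (m+1)) := Finset.univ.filter (fun i => t i ≤ x) with hS_def
    have hS0 : (0 : Fin (m+1)) ∈ S := by
      simp [hS_def, ht0, hx_def]
      positivity
    have hSne : S.Nonempty := ⟨0, hS0⟩
    set i₀ := S.max' hSne with hi0_def
    have hi0S : i₀ ∈ S := S.max'_mem hSne
    have hti0 : t i₀ ≤ x := by simpa [hS_def] using hi0S
    have hi0ne : i₀ ≠ Fin.last m := by
      intro h
      rw [h, htl] at hti0
      exact absurd (hti0.trans_lt hx1) (lt_irrefl 1)
    obtain ⟨i, hi⟩ := Fin.exists_castSucc_eq.mpr hi0ne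
    refine ⟨i, by rw [hi]; exact hti0, ?_⟩
    have hgt : x < t i.succ := by
      by_contra h
      push_neg at h
      have hmem : i.succ ∈ S := by simp [hS_def, h]
      have hle := S.le_max' _ hmem
      rw [← hi0_def, ← hi] at hle
      exact (Fin.castSucc_lt_succ : i.castSucc < i.succ).not_ge hle
    -- integrality: t i.succ > j / 2^N implies t i.succ ≥ (j+1)/2^N
    have hPient := htN i.succ
    set P : ℤ := p i.succ * 2 ^ Z with hP_def
    have hjP : (j:ℤ) < P := by
      have : ((j:ℕ):ℝ) < (P:ℝ) := by
        have := hgt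
        rw [hPient, hx_def, div_lt_div_iff₀ h2N h2N] at this
        exact lt_of_mul_lt_mul_right this h2N.le
      exact_mod_cast this
    rw [hPient]
    have hle : ((j:ℕ):ℝ) + 1 ≤ (P:ℝ) := by
      have : (j:ℤ) + 1 ≤ P := hjP
      exact_mod_cast this
    exact (div_le_div_iff_of_pos_right h2N).mpr hle
  -- the subdivision points
  have hmemT : ∀ j : Fin (2 ^ N + 1), ((j:ℕ):ℝ) / 2 ^ N ∈ Set.Icc (0:ℝ) 1 := by
    intro j
    have hj : (j:ℕ) ≤ 2 ^ N := Nat.lt_succ_iff.mp j.isLt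
    constructor
    · positivity
    · rw [div_le_one h2N]; exact_mod_cast hj
  refine ⟨2 ^ N, fun j => ((j:ℕ):ℝ) / 2 ^ N,
    fun j => (f ⟨((j:ℕ):ℝ) / 2 ^ N, hmemT j⟩ : ℝ), ?_, ?_, ?_, ?_, ?_, ?_, ?_, ?_, ?_⟩
  · simp
  · simp [Fin.val_last]
  · intro a b hab
    have : ((a:ℕ):ℝ) < ((b:ℕ):ℝ) := by exact_mod_cast hab
    exact div_lt_div_of_pos_right this h2N
  · have e0 : (⟨(((0 : Fin (2^N+1)):ℕ):ℝ) / 2 ^ N, hmemT 0⟩ : Set.Icc (0:ℝ) 1)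
        = ⟨0, by norm_num⟩ := Subtype.ext (by simp)
    simp only [e0]
    exact orderIso_Icc_zero f _
  · have e1 : (⟨(((Fin.last (2^N)):ℕ):ℝ) / 2 ^ N, hmemT _⟩ : Set.Icc (0:ℝ) 1)
        = ⟨1, by norm_num⟩ := Subtype.ext (by simp [Fin.val_last, div_self (ne_of_gt h2N)])
    simp only [e1]
    exact orderIso_Icc_one f _
  · intro a b hab
    have hx : ((a:ℕ):ℝ) / 2 ^ N < ((b:ℕ):ℝ) / 2 ^ N :=
      div_lt_div_of_pos_right (by exact_mod_cast hab) h2N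
    have := f.strictMono (show (⟨((a:ℕ):ℝ)/2^N, hmemT a⟩ : Set.Icc (0:ℝ) 1)
      < ⟨((b:ℕ):ℝ)/2^N, hmemT b⟩ from Subtype.mk_lt_mk.mpr hx)
    exact_mod_cast this
  · -- domain intervals are standard dyadic
    intro j
    refine ⟨(j:ℕ), N, by simp, ?_⟩
    simp only [Fin.val_succ]
    push_cast
    ring
  · -- range intervals are standard dyadic
    intro j
    obtain ⟨i, h1, h2⟩ := key j
    have hj1 : ((j:ℕ):ℝ) + 1 ≤ 2 ^ N := by exact_mod_cast j.isLt
    set xj : ℝ := ((j:ℕ):ℝ) / 2 ^ N with hxj_def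
    set xj1 : ℝ := (((j:ℕ):ℝ) + 1) / 2 ^ N with hxj1_def
    have hxjm : xj ∈ Set.Icc (0:ℝ) 1 := ⟨by positivity, by rw [hxj_def, div_le_one h2N]; linarith⟩
    have hxj1m : xj1 ∈ Set.Icc (0:ℝ) 1 :=
      ⟨by rw [hxj1_def]; positivity, by rw [hxj1_def, div_le_one h2N]; linarith⟩
    have hxled : xj ≤ xj1 := by
      rw [hxj_def, hxj1_def]
      gcongr
      linarith
    have ec : (⟨((j.castSucc:ℕ):ℝ) / 2 ^ N, hmemT j.castSucc⟩ : Set.Icc (0:ℝ) 1)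
        = ⟨xj, hxjm⟩ := Subtype.ext (by simp [hxj_def])
    have es : (⟨((j.succ:ℕ):ℝ) / 2 ^ N, hmemT j.succ⟩ : Set.Icc (0:ℝ) 1)
        = ⟨xj1, hxj1m⟩ := Subtype.ext (by simp only [Fin.val_succ, hxj1_def]; push_cast; ring)
    have hxjI : xj ∈ Set.Icc (t i.castSucc) (t i.succ) := ⟨h1, hxled.trans h2⟩
    have hxj1I : xj1 ∈ Set.Icc (t i.castSucc) (t i.succ) := ⟨h1.trans hxled, h2⟩
    have slope0 : (f ⟨xj, hxjm⟩ : ℝ) - s i.castSucc = 2 ^ (z i) * (xj - t i.castSucc) :=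
      haff i ⟨xj, hxjm⟩ ⟨t i.castSucc, htmem _⟩ hxjI (hcsmem i)
    have slope2 : (f ⟨xj1, hxj1m⟩ : ℝ) - (f ⟨xj, hxjm⟩ : ℝ) = 2 ^ (z i) * (xj1 - xj) :=
      haff i ⟨xj1, hxj1m⟩ ⟨xj, hxjm⟩ hxj1I hxjI
    have hdT : xj1 - xj = 1 / 2 ^ N := by rw [hxj_def, hxj1_def]; ring
    set g : ℕ := ((Z:ℤ) - z i).toNat with hg_def
    have hg : (g:ℤ) = (Z:ℤ) - z i := Int.toNat_of_nonneg (sub_nonneg.mpr (hzZ i))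
    set d : ℕ := E + g with hd_def
    have hd : (d:ℤ) = (N:ℤ) - z i := by rw [hd_def, hN_def]; push_cast; omega
    have h2d : (0:ℝ) < 2 ^ d := by positivity
    have hpow : (2:ℝ) ^ (z i) * 2 ^ d = 2 ^ N := by
      rw [← zpow_natCast (2:ℝ) d, ← zpow_natCast (2:ℝ) N,
        ← zpow_add₀ (two_ne_zero : (2:ℝ) ≠ 0)]
      congr 1
      omega
    have hrj : (f ⟨xj, hxjm⟩ : ℝ)
        = (q i.castSucc : ℝ) / 2 ^ E + 2 ^ (z i) * (xj - (p i.castSucc : ℝ) / 2 ^ E) := by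
      rw [hq i.castSucc, hp i.castSucc] at slope0
      linear_combination slope0
    set c' : ℤ := q i.castSucc * 2 ^ g + (j:ℤ) - p i.castSucc * 2 ^ Z with hc'_def
    have e1 : (2:ℝ) ^ d = 2 ^ E * 2 ^ g := by rw [hd_def, pow_add]
    have e2 : (2:ℝ) ^ N = 2 ^ E * 2 ^ Z := by rw [hN_def, pow_add]
    have e3 : (2:ℝ) ^ (z i) = 2 ^ N / 2 ^ d := (eq_div_iff (ne_of_gt h2d)).mpr hpow
    have h2E : (0:ℝ) < 2 ^ E := by positivity
    have hc'R : (f ⟨xj, hxjm⟩ : ℝ) * 2 ^ d = (c' : ℝ) := by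
      rw [hrj, e3, hxj_def, hc'_def]
      push_cast
      rw [e1, e2]
      field_simp
      ring
    have hc'0 : (0:ℤ) ≤ c' := by
      have h0f : (0:ℝ) ≤ (f ⟨xj, hxjm⟩ : ℝ) := (f ⟨xj, hxjm⟩).2.1
      have : (0:ℝ) ≤ (c' : ℝ) := by rw [← hc'R]; exact mul_nonneg h0f h2d.le
      exact_mod_cast this
    have hcast : ((c'.toNat : ℕ) : ℝ) = (c' : ℝ) := by exact_mod_cast Int.toNat_of_nonneg hc'0
    have hfrac : (2:ℝ) ^ (z i) / 2 ^ N * 2 ^ d = 1 := by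
      rw [div_mul_eq_mul_div, hpow, div_self (ne_of_gt h2N)]
    refine ⟨c'.toNat, d, ?_, ?_⟩
    · simp only [ec]
      rw [eq_div_iff (ne_of_gt h2d), hcast, hc'R]
    · simp only [es]
      rw [eq_div_iff (ne_of_gt h2d), hcast]
      have hstep : (f ⟨xj1, hxj1m⟩ : ℝ) = (f ⟨xj, hxjm⟩ : ℝ) + 2 ^ (z i) / 2 ^ N := by
        have := slope2
        rw [hdT] at this
        linear_combination this
      rw [hstep]
      linear_combination hc'R + hfrac
  · -- affine on each interval
    intro j u hu
    obtain ⟨i, h1, h2⟩ := key j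
    have hj1 : ((j:ℕ):ℝ) + 1 ≤ 2 ^ N := by exact_mod_cast j.isLt
    set xj : ℝ := ((j:ℕ):ℝ) / 2 ^ N with hxj_def
    set xj1 : ℝ := (((j:ℕ):ℝ) + 1) / 2 ^ N with hxj1_def
    have hxjm : xj ∈ Set.Icc (0:ℝ) 1 := ⟨by positivity, by rw [hxj_def, div_le_one h2N]; linarith⟩
    have hxj1m : xj1 ∈ Set.Icc (0:ℝ) 1 :=
      ⟨by rw [hxj1_def]; positivity, by rw [hxj1_def, div_le_one h2N]; linarith⟩
    have hxled : xj ≤ xj1 := by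
      rw [hxj_def, hxj1_def]; gcongr; linarith
    have ec : (⟨((j.castSucc:ℕ):ℝ) / 2 ^ N, hmemT j.castSucc⟩ : Set.Icc (0:ℝ) 1)
        = ⟨xj, hxjm⟩ := Subtype.ext (by simp [hxj_def])
    have es : (⟨((j.succ:ℕ):ℝ) / 2 ^ N, hmemT j.succ⟩ : Set.Icc (0:ℝ) 1)
        = ⟨xj1, hxj1m⟩ := Subtype.ext (by simp only [Fin.val_succ, hxj1_def]; push_cast; ring)
    have hTc : ((j.castSucc:ℕ):ℝ) / 2 ^ N = xj := by simp [hxj_def]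
    have hTs : ((j.succ:ℕ):ℝ) / 2 ^ N = xj1 := by
      simp only [Fin.val_succ, hxj1_def]; push_cast; ring
    simp only [ec, es, hTc, hTs] at hu ⊢
    have hxjI : xj ∈ Set.Icc (t i.castSucc) (t i.succ) := ⟨h1, hxled.trans h2⟩
    have hxj1I : xj1 ∈ Set.Icc (t i.castSucc) (t i.succ) := ⟨h1.trans hxled, h2⟩
    have huI : (u:ℝ) ∈ Set.Icc (t i.castSucc) (t i.succ) := ⟨h1.trans hu.1, hu.2.trans h2⟩
    have s1 := haff i u ⟨xj, hxjm⟩ huI hxjI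
    have s2 := haff i ⟨xj1, hxj1m⟩ ⟨xj, hxjm⟩ hxj1I hxjI
    have hdT : xj1 - xj = 1 / 2 ^ N := by rw [hxj_def, hxj1_def]; ring
    have hratio : ((f ⟨xj1, hxj1m⟩ : ℝ) - (f ⟨xj, hxjm⟩ : ℝ)) / (xj1 - xj) = 2 ^ (z i) := by
      rw [s2, hdT]
      field_simp
    rw [hratio]
    linarith [s1]
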